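/- Let A be an irreducible n×n nonnegative matrix and b a nonnegative vector in ℝⁿ with Ab ≠ λ₁(A)b, where λ₁(A) is the Perron root. Then there exists a nonnegative invertible matrix T with T⁻¹AT = A and T⁻¹b lying on the boundary of the nonnegative orthant (i.e., T⁻¹b is nonnegative with some zero coordinate). -/

import Mathlib

open Matrix Finset
open scoped NNReal ENNReal

/-- A nonnegative square matrix is irreducible if no simultaneous permutation of rows and
columns puts it in block upper triangular form with square diagonal blocks. -/
def Matrix.IsIrreducible' {n : ℕ} (A : Matrix (Fin n) (Fin n) ℝ) : Prop :=
  ¬ ∃ (σ : Equiv.Perm (Fin n)) (k : ℕ), 0 < k ∧ k < n ∧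
      ∀ i j : Fin n, k ≤ (i : ℕ) → (j : ℕ) < k → A (σ i) (σ j) = 0

variable {n : ℕ}

lemma pf_mul_nonneg {A B : Matrix (Fin n) (Fin n) ℝ} (hA : ∀ i j, 0 ≤ A i j)
    (hB : ∀ i j, 0 ≤ B i j) : ∀ i j, 0 ≤ (A * B) i j := by
  intro i j
  rw [Matrix.mul_apply]
  exact Finset.sum_nonneg fun k _ => mul_nonneg (hA i k) (hB k j)

lemma pf_pow_nonneg {A : Matrix (Fin n) (Fin n) ℝ} (hA : ∀ i j, 0 ≤ A i j) (k : ℕ) :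
    ∀ i j, 0 ≤ (A ^ k) i j := by
  induction k with
  | zero => intro i j; simp [Matrix.one_apply]; positivity
  | succ m ih => rw [pow_succ]; exact pf_mul_nonneg ih hA

lemma pf_mulVec_nonneg {A : Matrix (Fin n) (Fin n) ℝ} (hA : ∀ i j, 0 ≤ A i j)
    {x : Fin n → ℝ} (hx : ∀ i, 0 ≤ x i) : ∀ i, 0 ≤ A.mulVec x i := by
  intro i
  simp only [Matrix.mulVec, dotProduct]
  exact Finset.sum_nonneg fun k _ => mul_nonneg (hA i k) (hx k)

lemma pf_mulVec_mono {A : Matrix (Fin n) (Fin n) ℝ} (hA : ∀ i j, 0 ≤ A i j)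
    {x y : Fin n → ℝ} (h : ∀ i, x i ≤ y i) : ∀ i, A.mulVec x i ≤ A.mulVec y i := by
  intro i
  simp only [Matrix.mulVec, dotProduct]
  exact Finset.sum_le_sum fun k _ => mul_le_mul_of_nonneg_left (h k) (hA i k)

lemma pf_exists_perm (S : Finset (Fin n)) :
    ∃ σ : Equiv.Perm (Fin n), ∀ j : Fin n, (σ j ∈ S ↔ (j : ℕ) < S.card) := by
  classical
  have hcard : S.card + Sᶜ.card = n := by
    simpa using S.card_add_card_compl
  let e1 : Fin n ≃ Fin (S.card + Sᶜ.card) := finCongr hcard.symm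
  let e2 : Fin (S.card + Sᶜ.card) ≃ (Fin S.card ⊕ Fin Sᶜ.card) := finSumFinEquiv.symm
  let e3 : (Fin S.card ⊕ Fin Sᶜ.card) ≃ ({x // x ∈ S} ⊕ {x // x ∈ Sᶜ}) :=
    Equiv.sumCongr S.equivFin.symm Sᶜ.equivFin.symm
  let e4 : ({x // x ∈ S} ⊕ {x // x ∈ Sᶜ}) ≃ ({x // x ∈ S} ⊕ {x // ¬ x ∈ S}) :=
    Equiv.sumCongr (Equiv.refl _) (Equiv.subtypeEquivRight (fun x => Finset.mem_compl))
  let e5 : ({x // x ∈ S} ⊕ {x // ¬ x ∈ S}) ≃ Fin n := Equiv.sumCompl _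
  refine ⟨((((e1.trans e2).trans e3).trans e4).trans e5), fun j => ?_⟩
  by_cases hj : (j : ℕ) < S.card
  · have h2 : e2 (e1 j) = Sum.inl ⟨(j : ℕ), hj⟩ := by
      have : e1 j = Fin.castAdd Sᶜ.card ⟨(j : ℕ), hj⟩ := by
        apply Fin.ext; simp [e1]
      rw [this]
      exact finSumFinEquiv_symm_apply_castAdd _
    simp only [Equiv.trans_apply, h2, e3, e4, e5, Equiv.sumCongr_apply, Sum.map_inl,
      Equiv.sumCompl_apply_inl]
    simpa [hj] using (S.equivFin.symm ⟨(j : ℕ), hj⟩).2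
  · have hj' : (j : ℕ) - S.card < Sᶜ.card := by omega
    have h2 : e2 (e1 j) = Sum.inr ⟨(j : ℕ) - S.card, hj'⟩ := by
      have : e1 j = Fin.natAdd S.card ⟨(j : ℕ) - S.card, hj'⟩ := by
        apply Fin.ext; simp [e1]; omega
      rw [this]
      exact finSumFinEquiv_symm_apply_natAdd _
    simp only [Equiv.trans_apply, h2, e3, e4, e5, Equiv.sumCongr_apply, Sum.map_inr,
      Equiv.sumCompl_apply_inr]
    have := (Sᶜ.equivFin.symm ⟨(j : ℕ) - S.card, hj'⟩).2
    rw [Finset.mem_compl] at this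
    simp only [Equiv.subtypeEquivRight_apply]
    constructor
    · intro hmem; exact absurd hmem this
    · intro h; exact absurd h hj

lemma pf_no_invariant_set {A : Matrix (Fin n) (Fin n) ℝ} (hirr : A.IsIrreducible')
    (S : Finset (Fin n)) (hne : S.Nonempty) (hnu : S ≠ Finset.univ)
    (h : ∀ i ∉ S, ∀ j ∈ S, A i j = 0) : False := by
  obtain ⟨σ, hσ⟩ := pf_exists_perm S
  refine hirr ⟨σ, S.card, ?_, ?_, ?_⟩
  · exact Finset.card_pos.mpr hne
  · have : S ⊂ Finset.univ := ⟨Finset.subset_univ S, fun hsub => hnu (Finset.eq_univ_iff_forall.mpr fun x => hsub (Finset.mem_univ x))⟩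
    simpa using Finset.card_lt_card this
  · intro i j hi hj
    exact h (σ i) (fun hmem => absurd ((hσ i).mp hmem) (by omega)) (σ j) ((hσ j).mpr hj)

lemma pf_transpose_irr {A : Matrix (Fin n) (Fin n) ℝ} (hirr : A.IsIrreducible') :
    Aᵀ.IsIrreducible' := by
  rintro ⟨σ, k, hk0, hkn, hz⟩
  refine hirr ⟨Fin.revPerm.trans σ, n - k, by omega, by omega, ?_⟩
  intro i j hi hj
  have hri : ((Fin.revPerm i : Fin n) : ℕ) < k := by
    simp only [Fin.revPerm_apply, Fin.val_rev]; omega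
  have hrj : k ≤ ((Fin.revPerm j : Fin n) : ℕ) := by
    simp only [Fin.revPerm_apply, Fin.val_rev]; omega
  have := hz (Fin.revPerm j) (Fin.revPerm i) hrj hri
  simpa [Matrix.transpose_apply] using this

lemma pf_onePow_pos {A : Matrix (Fin n) (Fin n) ℝ} (hA : ∀ i j, 0 ≤ A i j)
    (hirr : A.IsIrreducible') {x : Fin n → ℝ} (hx : ∀ i, 0 ≤ x i) (hx0 : x ≠ 0) :
    ∀ i, 0 < (((1 + A) ^ (n - 1)).mulVec x) i := by
  classical
  have hone : ∀ i j, 0 ≤ (1 + A : Matrix (Fin n) (Fin n) ℝ) i j := by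
    intro i j
    simp only [Matrix.add_apply, Matrix.one_apply]
    have := hA i j
    split <;> linarith
  set y : ℕ → Fin n → ℝ := fun k => ((1 + A) ^ k).mulVec x with hy
  have hynn : ∀ k i, 0 ≤ y k i := fun k i =>
    pf_mulVec_nonneg (pf_pow_nonneg hone k) hx i
  have hsucc : ∀ k, y (k + 1) = fun i => y k i + A.mulVec (y k) i := by
    intro k
    funext i
    have : (1 + A) ^ (k + 1) = (1 + A) * (1 + A) ^ k := (pow_succ' _ _)
    rw [hy]
    simp only [this, ← Matrix.mulVec_mulVec, Matrix.add_mulVec, Matrix.one_mulVec]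
    rfl
  set s : ℕ → Finset (Fin n) := fun k => Finset.univ.filter (fun i => 0 < y k i) with hs
  have hmono : ∀ k, s k ⊆ s (k + 1) := by
    intro k i hi
    simp only [hs, Finset.mem_filter, Finset.mem_univ, true_and] at hi ⊢
    rw [hsucc k]
    have := pf_mulVec_nonneg hA (hynn k) i
    dsimp only
    linarith
  have hgrow : ∀ k, s k ≠ Finset.univ → (s k).Nonempty → s k ⊂ s (k + 1) := by
    intro k hnu hne
    refine Finset.ssubset_iff_of_subset (hmono k) |>.mpr ?_
    by_contra hno
    push_neg at hno
    have heq : s (k + 1) = s k := Finset.Subset.antisymm (fun i hi => hno i hi) (hmono k)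
    refine pf_no_invariant_set hirr (s k) hne hnu ?_
    intro i hi j hj
    simp only [hs, Finset.mem_filter, Finset.mem_univ, true_and, not_lt] at hi hj
    have hyk1 : y (k + 1) i = 0 := by
      have hi1 : i ∉ s (k + 1) := heq ▸ (by simpa [hs] using hi)
      simp only [hs, Finset.mem_filter, Finset.mem_univ, true_and, not_lt] at hi1
      exact le_antisymm hi1 (hynn (k + 1) i)
    have hyki : y k i = 0 := le_antisymm (by simpa [hs] using hi) (hynn k i)
    have hsum : A.mulVec (y k) i = 0 := by
      have := hsucc k
      have h2 : y (k + 1) i = y k i + A.mulVec (y k) i := by rw [this]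
      rw [hyk1, hyki] at h2
      linarith
    have : ∀ l ∈ Finset.univ, A i l * y k l = 0 := by
      rw [Matrix.mulVec, dotProduct] at hsum
      exact (Finset.sum_eq_zero_iff_of_nonneg
        (fun l _ => mul_nonneg (hA i l) (hynn k l))).mp hsum
    have hyj : 0 < y k j := by simpa [hs] using hj
    have := this j (Finset.mem_univ j)
    rcases mul_eq_zero.mp this with h | h
    · exact h
    · exact absurd h (ne_of_gt hyj)
  have hcard : ∀ k, k + 1 ≤ (s k).card ∨ s k = Finset.univ := by
    intro k
    induction k with
    | zero =>
      left
      have : ∃ i, 0 < x i := by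
        by_contra hno
        push_neg at hno
        exact hx0 (funext fun i => le_antisymm (hno i) (hx i))
      obtain ⟨i, hi⟩ := this
      have : i ∈ s 0 := by simp [hs, hy, Matrix.one_mulVec, hi]
      have := Finset.card_pos.mpr ⟨i, this⟩
      omega
    | succ m ih =>
      rcases ih with hc | hu
      · by_cases hnu : s m = Finset.univ
        · right
          exact Finset.eq_univ_iff_forall.mpr fun i => hmono m (hnu ▸ Finset.mem_univ i)
        · left
          have hne : (s m).Nonempty := Finset.card_pos.mp (by omega)
          have := Finset.card_lt_card (hgrow m hnu hne)
          omega
      · right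
        exact Finset.eq_univ_iff_forall.mpr fun i => hmono m (hu ▸ Finset.mem_univ i)
  have hfin : s (n - 1) = Finset.univ := by
    rcases hcard (n - 1) with hc | hu
    · apply Finset.eq_univ_of_card
      have h1 : (s (n - 1)).card ≤ n := by
        simpa using Finset.card_le_card (Finset.subset_univ (s (n - 1)))
      have hn : 0 < n := by
        rcases Nat.eq_zero_or_pos n with h | h
        · exfalso; apply hx0; funext i; exact absurd i.2 (by omega)
        · exact h
      simp only [Fintype.card_fin]
      omega
    · exact hu
  intro i
  have hmem : i ∈ s (n - 1) := hfin ▸ Finset.mem_univ i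
  simp only [hs, Finset.mem_filter] at hmem
  exact hmem.2

lemma pf_mem_spectrum_iff_det {K : Type*} [Field K] {m : ℕ} (M : Matrix (Fin m) (Fin m) K)
    (μ : K) : μ ∈ spectrum K M ↔ (μ • (1 : Matrix (Fin m) (Fin m) K) - M).det = 0 := by
  rw [spectrum.mem_iff, Matrix.isUnit_iff_isUnit_det, isUnit_iff_ne_zero, not_ne_iff,
    Algebra.algebraMap_eq_smul_one]

lemma pf_spectrum_transpose {K : Type*} [Field K] {m : ℕ} (M : Matrix (Fin m) (Fin m) K)
    (μ : K) : μ ∈ spectrum K Mᵀ ↔ μ ∈ spectrum K M := by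
  rw [pf_mem_spectrum_iff_det, pf_mem_spectrum_iff_det, ← Matrix.det_transpose (μ • 1 - M)]
  congr! 2
  rw [Matrix.transpose_sub, Matrix.transpose_smul, Matrix.transpose_one]

lemma pf_map_complex_spectrum (A : Matrix (Fin n) (Fin n) ℝ) (μ : ℝ) (h : μ ∈ spectrum ℝ A) :
    (μ : ℂ) ∈ spectrum ℂ (A.map (fun x : ℝ => (x : ℂ))) := by
  rw [pf_mem_spectrum_iff_det] at h ⊢
  have heq : ((μ : ℂ) • (1 : Matrix (Fin n) (Fin n) ℂ) - A.map (fun x : ℝ => (x : ℂ)))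
      = (μ • (1 : Matrix (Fin n) (Fin n) ℝ) - A).map (Complex.ofRealHom : ℝ →+* ℂ) := by
    ext i j
    simp only [Matrix.map_apply, Matrix.sub_apply, Matrix.smul_apply, Matrix.one_apply]
    split <;> simp
  rw [heq, ← RingHom.mapMatrix_apply, ← RingHom.map_det, h, map_zero]

lemma pf_rho_nonneg {A : Matrix (Fin n) (Fin n) ℝ} {ρ : ℝ} (hρ : ρ ∈ spectrum ℝ A)
    (hρmax : ∀ μ ∈ spectrum ℂ (A.map (fun x : ℝ => (x : ℂ))), ‖μ‖ ≤ ρ) : 0 ≤ ρ := by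
  have h := hρmax _ (pf_map_complex_spectrum A ρ hρ)
  rw [Complex.norm_real, Real.norm_eq_abs] at h
  rcases abs_cases ρ with ⟨h1, h2⟩ | ⟨h1, h2⟩ <;> linarith

attribute [local instance] Matrix.linftyOpNormedAddCommGroup Matrix.linftyOpNormedRing
  Matrix.linftyOpNormedAlgebra

lemma pf_gelfand {A : Matrix (Fin n) (Fin n) ℝ} (hA : ∀ i j, 0 ≤ A i j) (hn : 0 < n) {ρ c : ℝ}
    (hρmax : ∀ μ ∈ spectrum ℂ (A.map (fun x : ℝ => (x : ℂ))), ‖μ‖ ≤ ρ)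
    (hρ0 : 0 ≤ ρ) (hρc : ρ < c) {y : Fin n → ℝ} (hy : ∀ i, 0 < y i)
    (hAy : ∀ i, c * y i ≤ A.mulVec y i) : False := by
  classical
  haveI : Nonempty (Fin n) := Fin.pos_iff_nonempty.mp hn
  have hc0 : 0 < c := lt_of_le_of_lt hρ0 hρc
  -- power estimate
  have hpow : ∀ k i, c ^ k * y i ≤ ((A ^ k).mulVec y) i := by
    intro k
    induction k with
    | zero => intro i; simp [Matrix.one_mulVec]
    | succ m ih =>
      intro i
      have h1 : (A ^ (m + 1)).mulVec y = A.mulVec ((A ^ m).mulVec y) := by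
        rw [pow_succ', ← Matrix.mulVec_mulVec]
      rw [h1]
      have h2 : A.mulVec (fun j => c ^ m * y j) i ≤ A.mulVec ((A ^ m).mulVec y) i :=
        pf_mulVec_mono hA ih i
      have h3 : A.mulVec (fun j => c ^ m * y j) i = c ^ m * A.mulVec y i := by
        have : (fun j => c ^ m * y j) = (c ^ m) • y := by funext j; simp [Pi.smul_apply]
        rw [this, Matrix.mulVec_smul]
        simp
      have h4 : c ^ m * (c * y i) ≤ c ^ m * A.mulVec y i :=
        mul_le_mul_of_nonneg_left (hAy i) (by positivity)
      calc c ^ (m + 1) * y i = c ^ m * (c * y i) := by ring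
        _ ≤ c ^ m * A.mulVec y i := h4
        _ = A.mulVec (fun j => c ^ m * y j) i := h3.symm
        _ ≤ _ := h2
  -- min and max of y
  set m₀ : ℝ := Finset.univ.inf' Finset.univ_nonempty y with hm₀
  set M₀ : ℝ := Finset.univ.sup' Finset.univ_nonempty y with hM₀
  have hm₀pos : 0 < m₀ := by
    rw [hm₀, Finset.lt_inf'_iff]
    exact fun i _ => hy i
  have hM₀pos : 0 < M₀ := by
    obtain ⟨i⟩ := ‹Nonempty (Fin n)›
    exact lt_of_lt_of_le (hy i) (Finset.le_sup' _ (Finset.mem_univ i))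
  set q : ℝ := m₀ / M₀ with hq
  have hqpos : 0 < q := div_pos hm₀pos hM₀pos
  set Ac : Matrix (Fin n) (Fin n) ℂ := A.map (fun x : ℝ => (x : ℂ)) with hAc
  -- row sum bound
  have hrow : ∀ k, c ^ k * q ≤ ‖Ac ^ k‖ := by
    intro k
    obtain ⟨i⟩ := ‹Nonempty (Fin n)›
    have h1 : c ^ k * m₀ ≤ c ^ k * y i :=
      mul_le_mul_of_nonneg_left (Finset.inf'_le _ (Finset.mem_univ i)) (by positivity)
    have h2 : ((A ^ k).mulVec y) i ≤ (∑ j, (A ^ k) i j) * M₀ := by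
      rw [Matrix.mulVec, dotProduct, Finset.sum_mul]
      refine Finset.sum_le_sum fun j _ => ?_
      exact mul_le_mul_of_nonneg_left (Finset.le_sup' _ (Finset.mem_univ j))
        (pf_pow_nonneg hA k i j)
    have h3 : c ^ k * m₀ ≤ (∑ j, (A ^ k) i j) * M₀ := le_trans h1 (le_trans (hpow k i) h2)
    have h4 : c ^ k * q ≤ ∑ j, (A ^ k) i j := by
      rw [hq, ← mul_div_assoc, div_le_iff₀ hM₀pos]
      exact h3
    have h5 : Ac ^ k = (A ^ k).map (fun x : ℝ => (x : ℂ)) := by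
      rw [hAc]
      have : A.map (fun x : ℝ => (x : ℂ)) = (Complex.ofRealHom : ℝ →+* ℂ).mapMatrix A := rfl
      rw [this, ← map_pow]
      rfl
    have h6 : (∑ j, ‖(Ac ^ k) i j‖₊ : ℝ≥0) ≤ ‖Ac ^ k‖₊ := by
      rw [Matrix.linfty_opNNNorm_def]
      exact Finset.le_sup (f := fun i => ∑ j, ‖(Ac ^ k) i j‖₊) (Finset.mem_univ i)
    have h7 : (∑ j, ‖(Ac ^ k) i j‖ : ℝ) ≤ ‖Ac ^ k‖ := by
      have := NNReal.coe_le_coe.mpr h6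
      simpa [NNReal.coe_sum] using this
    have h8 : (∑ j, ‖(Ac ^ k) i j‖ : ℝ) = ∑ j, (A ^ k) i j := by
      refine Finset.sum_congr rfl fun j _ => ?_
      rw [h5]
      simp only [Matrix.map_apply, Complex.norm_real, Real.norm_eq_abs]
      exact abs_of_nonneg (pf_pow_nonneg hA k i j)
    linarith
  -- spectral radius bounds
  haveI : CompleteSpace (Matrix (Fin n) (Fin n) ℂ) := FiniteDimensional.complete ℂ _
  have hGel := spectrum.pow_nnnorm_pow_one_div_tendsto_nhds_spectralRadius Ac
  have hupper : spectralRadius ℂ Ac ≤ ENNReal.ofReal ρ := by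
    rw [spectralRadius]
    refine iSup₂_le fun μ hμ => ?_
    rw [← enorm_eq_nnnorm, ← ofReal_norm]
    exact ENNReal.ofReal_le_ofReal (hρmax μ hμ)
  -- lower bound sequence
  have hg : Filter.Tendsto (fun k : ℕ => ENNReal.ofReal (c * q ^ (1 / (k : ℝ))))
      Filter.atTop (nhds (ENNReal.ofReal c)) := by
    have h1 : Filter.Tendsto (fun k : ℕ => (1 / (k : ℝ))) Filter.atTop (nhds 0) :=
      tendsto_one_div_atTop_nhds_zero_nat
    have h2 : ContinuousAt (fun t : ℝ => q ^ t) 0 :=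
      Real.continuousAt_const_rpow (ne_of_gt hqpos)
    have h3 : Filter.Tendsto (fun k : ℕ => q ^ (1 / (k : ℝ))) Filter.atTop (nhds (q ^ (0:ℝ))) :=
      (h2.tendsto.comp h1)
    rw [Real.rpow_zero] at h3
    have h4 : Filter.Tendsto (fun k : ℕ => c * q ^ (1 / (k : ℝ))) Filter.atTop (nhds (c * 1)) :=
      h3.const_mul c
    rw [mul_one] at h4
    exact (ENNReal.continuous_ofReal.tendsto c).comp h4
  have hle : ∀ᶠ k : ℕ in Filter.atTop,
      ENNReal.ofReal (c * q ^ (1 / (k : ℝ))) ≤ (‖Ac ^ k‖₊ : ℝ≥0∞) ^ (1 / (k : ℝ)) := by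
    filter_upwards [Filter.eventually_ge_atTop 1] with k hk
    have hkR : (0:ℝ) < (k : ℝ) := by exact_mod_cast hk
    have hmain : c * q ^ (1 / (k : ℝ)) ≤ ‖Ac ^ k‖ ^ (1 / (k : ℝ)) := by
      have h0 : (0:ℝ) ≤ c ^ k * q := by positivity
      have h1 : (c ^ k * q) ^ (1 / (k : ℝ)) ≤ ‖Ac ^ k‖ ^ (1 / (k : ℝ)) :=
        Real.rpow_le_rpow h0 (hrow k) (by positivity)
      have h2 : (c ^ k * q) ^ (1 / (k : ℝ)) = c * q ^ (1 / (k : ℝ)) := by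
        rw [Real.mul_rpow (by positivity) (le_of_lt hqpos)]
        congr 1
        rw [← Real.rpow_natCast c k, ← Real.rpow_mul (le_of_lt hc0)]
        rw [mul_one_div, div_self (ne_of_gt hkR), Real.rpow_one]
      rw [← h2]; exact h1
    calc ENNReal.ofReal (c * q ^ (1 / (k : ℝ)))
        ≤ ENNReal.ofReal (‖Ac ^ k‖ ^ (1 / (k : ℝ))) := ENNReal.ofReal_le_ofReal hmain
      _ = (ENNReal.ofReal ‖Ac ^ k‖) ^ (1 / (k : ℝ)) := by
          rw [← ENNReal.ofReal_rpow_of_nonneg (norm_nonneg _) (by positivity)]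
      _ = (‖Ac ^ k‖₊ : ℝ≥0∞) ^ (1 / (k : ℝ)) := by rw [ofReal_norm, enorm_eq_nnnorm]
  have hlower : ENNReal.ofReal c ≤ spectralRadius ℂ Ac :=
    le_of_tendsto_of_tendsto hg hGel hle
  have : ENNReal.ofReal c ≤ ENNReal.ofReal ρ := le_trans hlower hupper
  rw [ENNReal.ofReal_le_ofReal_iff hρ0] at this
  linarith

lemma pf_exists_pos_eigenvector {A : Matrix (Fin n) (Fin n) ℝ} (hA : ∀ i j, 0 ≤ A i j)
    (hirr : A.IsIrreducible') {ρ : ℝ} (hρ : ρ ∈ spectrum ℝ A)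
    (hρmax : ∀ μ ∈ spectrum ℂ (A.map (fun x : ℝ => (x : ℂ))), ‖μ‖ ≤ ρ)
    (hn : 0 < n) : ∃ v : Fin n → ℝ, (∀ i, 0 < v i) ∧ A.mulVec v = ρ • v := by
  classical
  haveI : Nonempty (Fin n) := Fin.pos_iff_nonempty.mp hn
  have hρ0 : 0 ≤ ρ := pf_rho_nonneg hρ hρmax
  -- get a real eigenvector
  obtain ⟨w, hw0, hw⟩ : ∃ w, w ≠ 0 ∧ (ρ • (1 : Matrix (Fin n) (Fin n) ℝ) - A).mulVec w = 0 := by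
    rw [Matrix.exists_mulVec_eq_zero_iff]
    exact (pf_mem_spectrum_iff_det A ρ).mp hρ
  have hAw : A.mulVec w = ρ • w := by
    have h1 : (ρ • (1 : Matrix (Fin n) (Fin n) ℝ) - A).mulVec w
        = ρ • w - A.mulVec w := by
      rw [Matrix.sub_mulVec, Matrix.smul_mulVec, Matrix.one_mulVec]
    rw [h1] at hw
    have := sub_eq_zero.mp hw
    exact this.symm
  set v₀ : Fin n → ℝ := fun i => |w i| with hv₀
  have hv₀nn : ∀ i, 0 ≤ v₀ i := fun i => abs_nonneg _
  have hv₀0 : v₀ ≠ 0 := by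
    intro h
    apply hw0
    funext i
    have : v₀ i = 0 := by rw [h]; rfl
    simpa [hv₀, abs_eq_zero] using this
  have hineq : ∀ i, ρ * v₀ i ≤ A.mulVec v₀ i := by
    intro i
    have h1 : ρ * v₀ i = |ρ * w i| := by
      rw [abs_mul, abs_of_nonneg hρ0]
    have h2 : ρ * w i = A.mulVec w i := by rw [hAw]; rfl
    have h3 : |A.mulVec w i| ≤ A.mulVec v₀ i := by
      rw [Matrix.mulVec, dotProduct, Matrix.mulVec, dotProduct]
      refine le_trans (Finset.abs_sum_le_sum_abs _ _) ?_
      refine Finset.sum_le_sum fun j _ => ?_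
      rw [abs_mul, abs_of_nonneg (hA i j)]
    rw [h1, h2]
    exact h3
  set z : Fin n → ℝ := fun i => A.mulVec v₀ i - ρ * v₀ i with hz
  have hznn : ∀ i, 0 ≤ z i := fun i => by simp [hz]; linarith [hineq i]
  by_cases hz0 : z = 0
  · -- equality case : v₀ is an eigenvector; positivity via (1+A)^(n-1)
    have heq : A.mulVec v₀ = ρ • v₀ := by
      funext i
      have : z i = 0 := by rw [hz0]; rfl
      simp only [hz] at this
      have : A.mulVec v₀ i = ρ * v₀ i := by linarith
      simpa [Pi.smul_apply, smul_eq_mul] using this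
    have hpow : ∀ k, ((1 + A) ^ k).mulVec v₀ = ((1 + ρ) ^ k) • v₀ := by
      intro k
      induction k with
      | zero => simp [Matrix.one_mulVec]
      | succ m ih =>
        rw [pow_succ', ← Matrix.mulVec_mulVec, ih, Matrix.mulVec_smul, Matrix.add_mulVec,
          Matrix.one_mulVec, heq, pow_succ]
        funext i
        simp [Pi.smul_apply, smul_eq_mul]
        ring
    have hpos := pf_onePow_pos hA hirr hv₀nn hv₀0
    refine ⟨v₀, fun i => ?_, heq⟩
    have h1 := hpos i
    rw [hpow (n - 1)] at h1
    have h2 : (0:ℝ) < (1 + ρ) ^ (n - 1) := by positivity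
    simp only [Pi.smul_apply, smul_eq_mul] at h1
    nlinarith [hv₀nn i]
  · -- strict case: contradiction with the spectral bound
    exfalso
    set B : Matrix (Fin n) (Fin n) ℝ := (1 + A) ^ (n - 1) with hB
    have hy : ∀ i, 0 < B.mulVec v₀ i := pf_onePow_pos hA hirr hv₀nn hv₀0
    have hBz : ∀ i, 0 < B.mulVec z i := pf_onePow_pos hA hirr hznn hz0
    set y : Fin n → ℝ := B.mulVec v₀ with hy'
    have hcomm : A * B = B * A := by
      exact ((Commute.one_right A).add_right (Commute.refl A)).pow_right (n - 1)
    have hkey : ∀ i, A.mulVec y i - ρ * y i = B.mulVec z i := by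
      intro i
      have h1 : A.mulVec y = B.mulVec (A.mulVec v₀) := by
        rw [hy', Matrix.mulVec_mulVec, Matrix.mulVec_mulVec, hcomm]
      have h2 : B.mulVec z = fun i => B.mulVec (A.mulVec v₀) i - ρ * B.mulVec v₀ i := by
        have hzfun : z = fun i => A.mulVec v₀ i - ρ * v₀ i := rfl
        have : z = A.mulVec v₀ - ρ • v₀ := by
          funext j; simp [hzfun, Pi.sub_apply, Pi.smul_apply, smul_eq_mul]
        rw [this, Matrix.mulVec_sub, Matrix.mulVec_smul]
        funext j
        simp [Pi.sub_apply, Pi.smul_apply, smul_eq_mul]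
      rw [h1, h2]
    set c : ℝ := Finset.univ.inf' Finset.univ_nonempty (fun i => A.mulVec y i / y i) with hc
    have hρc : ρ < c := by
      rw [hc, Finset.lt_inf'_iff]
      intro i _
      rw [lt_div_iff₀ (hy i)]
      have := hkey i
      have := hBz i
      nlinarith [hy i]
    have hAy : ∀ i, c * y i ≤ A.mulVec y i := by
      intro i
      have h1 : c ≤ A.mulVec y i / y i := Finset.inf'_le _ (Finset.mem_univ i)
      rw [le_div_iff₀ (hy i)] at h1
      linarith
    exact pf_gelfand hA hn hρmax hρ0 hρc hy hAy

/-- If `A` is irreducible nonnegative, `b ≥ 0` and `A b ≠ λ₁(A) b` (where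
`ρ = λ₁(A)` is the Perron root), then there is a nonnegative invertible `T` with
`T⁻¹ A T = A` and `T⁻¹ b` on the boundary of the nonnegative orthant. -/
theorem exists_nonneg_similarity_fixing_A_pushing_b_to_boundary
    {n : ℕ} (A : Matrix (Fin n) (Fin n) ℝ) (hA : ∀ i j, 0 ≤ A i j)
    (hirr : A.IsIrreducible') (b : Fin n → ℝ) (hb : ∀ i, 0 ≤ b i)
    (ρ : ℝ) (hρ : ρ ∈ spectrum ℝ A)
    (hρmax : ∀ μ ∈ spectrum ℂ (A.map (fun x : ℝ => (x : ℂ))), ‖μ‖ ≤ ρ)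
    (hbe : A.mulVec b ≠ ρ • b) :
    ∃ T : Matrix (Fin n) (Fin n) ℝ, (∀ i j, 0 ≤ T i j) ∧ T.det ≠ 0 ∧
      T⁻¹ * A * T = A ∧ (∀ i, 0 ≤ (T⁻¹.mulVec b) i) ∧ ∃ i, (T⁻¹.mulVec b) i = 0 := by
  classical
  rcases Nat.eq_zero_or_pos n with hn | hn
  · exfalso
    apply hbe
    funext i
    exact absurd i.isLt (by omega)
  haveI : Nonempty (Fin n) := Fin.pos_iff_nonempty.mp hn
  have hinv1 : (1 : Matrix (Fin n) (Fin n) ℝ)⁻¹ = 1 := Matrix.inv_eq_right_inv (by simp)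
  by_cases hbz : ∃ i, b i = 0
  · refine ⟨1, ?_, by simp, by simp, ?_, ?_⟩
    · intro i j
      by_cases h : i = j <;> simp [Matrix.one_apply, h]
    · intro i; simpa [hinv1, Matrix.one_mulVec] using hb i
    · obtain ⟨i, hi⟩ := hbz
      exact ⟨i, by simp [hinv1, Matrix.one_mulVec, hi]⟩
  push_neg at hbz
  have hbpos : ∀ i, 0 < b i := fun i => lt_of_le_of_ne (hb i) (Ne.symm (hbz i))
  -- right Perron vector
  obtain ⟨v, hv, hAv⟩ := pf_exists_pos_eigenvector hA hirr hρ hρmax hn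
  -- left Perron vector
  have hAT : ∀ i j, 0 ≤ Aᵀ i j := fun i j => hA j i
  have hirrT := pf_transpose_irr hirr
  have hρT : ρ ∈ spectrum ℝ Aᵀ := (pf_spectrum_transpose A ρ).mpr hρ
  have hρmaxT : ∀ μ ∈ spectrum ℂ (Aᵀ.map (fun x : ℝ => (x : ℂ))), ‖μ‖ ≤ ρ := by
    intro μ hμ
    apply hρmax
    have hmt : Aᵀ.map (fun x : ℝ => (x : ℂ)) = (A.map (fun x : ℝ => (x : ℂ)))ᵀ := rfl
    rw [hmt] at hμ
    exact (pf_spectrum_transpose _ μ).mp hμ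
  obtain ⟨u, hu, hAu⟩ := pf_exists_pos_eigenvector hAT hirrT hρT hρmaxT hn
  -- scalar quantities
  set d : ℝ := ∑ j, u j * v j with hd
  have hdpos : 0 < d :=
    Finset.sum_pos (fun j _ => mul_pos (hu j) (hv j)) Finset.univ_nonempty
  set c₀ : ℝ := (∑ j, u j * b j) / d with hc₀
  have hc₀pos : 0 < c₀ :=
    div_pos (Finset.sum_pos (fun j _ => mul_pos (hu j) (hbpos j)) Finset.univ_nonempty) hdpos
  -- eigen-equations in coordinates
  have hAv' : ∀ i, ∑ k, A i k * v k = ρ * v i := by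
    intro i
    have := congrFun hAv i
    simpa [Matrix.mulVec, dotProduct, Pi.smul_apply, smul_eq_mul] using this
  have hAu' : ∀ j, ∑ k, A k j * u k = ρ * u j := by
    intro j
    have := congrFun hAu j
    simpa [Matrix.mulVec, dotProduct, Matrix.transpose_apply, Pi.smul_apply,
      smul_eq_mul] using this
  -- spectral projection
  set P : Matrix (Fin n) (Fin n) ℝ := Matrix.of (fun i j => v i * u j / d) with hP
  have hPnn : ∀ i j, 0 ≤ P i j := fun i j => by
    rw [hP]
    exact div_nonneg (mul_nonneg (le_of_lt (hv i)) (le_of_lt (hu j))) (le_of_lt hdpos)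
  have hAP : A * P = ρ • P := by
    ext i j
    rw [Matrix.mul_apply]
    simp only [hP, Matrix.smul_apply, Matrix.of_apply, smul_eq_mul]
    rw [Finset.sum_congr rfl (fun k _ => by ring :
      ∀ k ∈ Finset.univ, A i k * (v k * u j / d) = (A i k * v k) * (u j / d))]
    rw [← Finset.sum_mul, hAv' i]
    ring
  have hPA : P * A = ρ • P := by
    ext i j
    rw [Matrix.mul_apply]
    simp only [hP, Matrix.smul_apply, Matrix.of_apply, smul_eq_mul]
    rw [Finset.sum_congr rfl (fun k _ => by ring :
      ∀ k ∈ Finset.univ, (v i * u k / d) * A k j = (A k j * u k) * (v i / d))]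
    rw [← Finset.sum_mul, hAu' j]
    ring
  have hPP : P * P = P := by
    ext i j
    rw [Matrix.mul_apply]
    simp only [hP, Matrix.of_apply]
    rw [Finset.sum_congr rfl (fun k _ => by ring :
      ∀ k ∈ Finset.univ, (v i * u k / d) * (v k * u j / d) = (u k * v k) * (v i * u j / (d * d)))]
    rw [← Finset.sum_mul, ← hd]
    field_simp
  -- the critical scalar γ
  set γ : ℝ := Finset.univ.inf' Finset.univ_nonempty (fun i => b i / (c₀ * v i)) with hγ
  have hγpos : 0 < γ := by
    rw [hγ, Finset.lt_inf'_iff]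
    exact fun i _ => div_pos (hbpos i) (mul_pos hc₀pos (hv i))
  have hγle : ∀ i, γ ≤ b i / (c₀ * v i) := fun i => Finset.inf'_le _ (Finset.mem_univ i)
  obtain ⟨i₀, _, hi₀⟩ := Finset.exists_mem_eq_inf' Finset.univ_nonempty
    (fun i => b i / (c₀ * v i))
  have hsum_ub : ∑ j, u j * b j = c₀ * d := by
    rw [hc₀]
    field_simp
  have hγlt1 : γ < 1 := by
    by_contra hge
    push_neg at hge
    have hle' : ∀ i, c₀ * v i ≤ b i := by
      intro i
      have h1 : (1:ℝ) ≤ b i / (c₀ * v i) := le_trans hge (hγle i)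
      rw [le_div_iff₀ (mul_pos hc₀pos (hv i))] at h1
      linarith
    by_cases hex : ∃ i, c₀ * v i < b i
    · obtain ⟨i, hi⟩ := hex
      have hlt : ∑ j, u j * (c₀ * v j) < ∑ j, u j * b j := by
        refine Finset.sum_lt_sum (fun j _ => mul_le_mul_of_nonneg_left (hle' j)
          (le_of_lt (hu j))) ⟨i, Finset.mem_univ i, ?_⟩
        exact mul_lt_mul_of_pos_left hi (hu i)
      have heq2 : ∑ j, u j * (c₀ * v j) = c₀ * d := by
        rw [hd, Finset.mul_sum]
        exact Finset.sum_congr rfl fun j _ => by ring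
      rw [heq2, hsum_ub] at hlt
      exact lt_irrefl _ hlt
    · push_neg at hex
      have hbeq : b = c₀ • v := by
        funext i
        exact le_antisymm (hex i) (hle' i)
      apply hbe
      rw [hbeq, Matrix.mulVec_smul, hAv, smul_comm]
  have h1γ : (0:ℝ) < 1 - γ := by linarith
  have h1γne : (1:ℝ) - γ ≠ 0 := ne_of_gt h1γ
  -- the similarity
  set T : Matrix (Fin n) (Fin n) ℝ := (1 - γ) • 1 + γ • P with hT
  set T' : Matrix (Fin n) (Fin n) ℝ := (1 - γ)⁻¹ • (1 - γ • P) with hT'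
  have hTnn : ∀ i j, 0 ≤ T i j := by
    intro i j
    rw [hT]
    simp only [Matrix.add_apply, Matrix.smul_apply, Matrix.one_apply, smul_eq_mul]
    have := hPnn i j
    split <;> nlinarith [hγpos, h1γ]
  have hTexp : T * (1 - γ • P) = (1 - γ) • (1 : Matrix (Fin n) (Fin n) ℝ) := by
    rw [hT]
    simp only [Matrix.add_mul, Matrix.smul_mul, Matrix.mul_sub, Matrix.mul_smul,
      Matrix.mul_one, Matrix.one_mul, hPP, smul_smul]
    module
  have hTT' : T * T' = 1 := by
    rw [hT', Matrix.mul_smul, hTexp, smul_smul, inv_mul_cancel₀ h1γne, one_smul]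
  have hT'T : T' * T = 1 := mul_eq_one_comm.mp hTT'
  have hTunit : IsUnit T := ⟨⟨T, T', hTT', hT'T⟩, rfl⟩
  have hdet : T.det ≠ 0 := by
    have := (Matrix.isUnit_iff_isUnit_det T).mp hTunit
    exact IsUnit.ne_zero this
  have hTinv : T⁻¹ = T' := Matrix.inv_eq_right_inv hTT'
  have hT'A : T' * A = A * T' := by
    rw [hT']
    simp only [Matrix.smul_mul, Matrix.mul_smul, Matrix.sub_mul, Matrix.mul_sub,
      Matrix.one_mul, Matrix.mul_one, hAP, hPA]
  have hconj : T⁻¹ * A * T = A := by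
    rw [hTinv, hT'A, mul_assoc, hT'T, mul_one]
  -- the vector T⁻¹ b
  have hPb : P.mulVec b = fun i => c₀ * v i := by
    funext i
    rw [Matrix.mulVec, dotProduct]
    simp only [hP, Matrix.of_apply]
    rw [Finset.sum_congr rfl (fun j _ => by ring :
      ∀ j ∈ Finset.univ, (v i * u j / d) * b j = (u j * b j) * (v i / d))]
    rw [← Finset.sum_mul, hsum_ub]
    field_simp
  have hTb : T⁻¹.mulVec b = fun i => (1 - γ)⁻¹ * (b i - γ * (c₀ * v i)) := by
    rw [hTinv, hT']
    funext i
    rw [Matrix.smul_mulVec, Matrix.sub_mulVec, Matrix.smul_mulVec,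
      Matrix.one_mulVec, hPb]
    simp only [Pi.smul_apply, Pi.sub_apply, smul_eq_mul]
  refine ⟨T, hTnn, hdet, hconj, ?_, ⟨i₀, ?_⟩⟩
  · intro i
    rw [hTb]
    have h1 : γ * (c₀ * v i) ≤ b i := by
      have := hγle i
      rw [le_div_iff₀ (mul_pos hc₀pos (hv i))] at this
      linarith
    have h2 : (0:ℝ) ≤ (1 - γ)⁻¹ := le_of_lt (inv_pos.mpr h1γ)
    dsimp only
    nlinarith
  · rw [hTb]
    dsimp only
    have : γ * (c₀ * v i₀) = b i₀ := by
      rw [hγ, hi₀, div_mul_cancel₀ _ (ne_of_gt (mul_pos hc₀pos (hv i₀)))]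
    rw [this]
    ring
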